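/- Every compact regular frame is strongly regular: if L is a compact regular frame, then every a ∈ L satisfies a = sSup {b | b ≺₀ a}, where ≺₀ is the greatest interpolative relation contained in the well-inside relation ≺ of L. -/

import Mathlib

/-- The well-inside relation of a frame: `b` is well inside `a` iff `bᶜ ⊔ a = ⊤`. -/
def WellInside {L : Type*} [Order.Frame L] (b a : L) : Prop := bᶜ ⊔ a = ⊤

/-- A frame is regular if every element is the join of the elements well inside it. -/
def IsRegularFrame (L : Type*) [Order.Frame L] : Prop :=
  ∀ a : L, a = sSup {b | WellInside b a}

/-- A frame is compact if `⊤` is a compact element. -/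
def IsCompactFrame (L : Type*) [Order.Frame L] : Prop :=
  ∀ S : Set L, ⊤ ≤ sSup S → ∃ T : Set L, T ⊆ S ∧ T.Finite ∧ ⊤ ≤ sSup T

/-- A binary relation `r` is interpolative if `r x y` implies there is `z`
with `r x z` and `r z y`. -/
def Interpolative {A : Type*} (r : A → A → Prop) : Prop :=
  ∀ x y, r x y → ∃ z, r x z ∧ r z y

/-- The greatest interpolative relation contained in `r`: the union of all
interpolative relations contained in `r`. -/
def gis {A : Type*} (r : A → A → Prop) : A → A → Prop :=
  fun x y => ∃ s : A → A → Prop,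
    (∀ a b, s a b → r a b) ∧ Interpolative s ∧ s x y

/-- A finite join of elements well inside `a` is well inside `a`. -/
lemma wellInside_sSup_finite {L : Type*} [Order.Frame L] {a : L} {T : Set L}
    (hT : T.Finite) (h : ∀ t ∈ T, WellInside t a) : WellInside (sSup T) a := by
  revert h
  refine Set.Finite.induction_on T hT ?_ ?_
  · intro _; simp [WellInside]
  · intro x s _ _ ih h
    have hx : WellInside x a := h x (Set.mem_insert x s)
    have hs : WellInside (sSup s) a := ih fun t ht => h t (Set.mem_insert_of_mem x ht)
    unfold WellInside at *
    rw [sSup_insert, compl_sup, sup_inf_right, hx, hs, inf_top_eq]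

/-- In a compact regular frame, the well-inside relation interpolates. -/
lemma wellInside_interpolative {L : Type*} [Order.Frame L]
    (hc : IsCompactFrame L) (hr : IsRegularFrame L) :
    Interpolative (WellInside (L := L)) := by
  intro b a hba
  have hS : ⊤ ≤ sSup ({bᶜ} ∪ {c | WellInside c a}) := by
    rw [sSup_union, sSup_singleton, ← hr a]
    exact hba.ge
  obtain ⟨T, hTS, hTfin, hTtop⟩ := hc _ hS
  refine ⟨sSup (T \ {bᶜ}), ?_, ?_⟩
  · have : sSup T ≤ bᶜ ⊔ sSup (T \ {bᶜ}) := by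
      apply sSup_le
      intro t ht
      by_cases h : t = bᶜ
      · exact le_sup_of_le_left h.le
      · exact le_sup_of_le_right (le_sSup ⟨ht, h⟩)
    exact top_le_iff.mp (hTtop.trans this)
  · apply wellInside_sSup_finite (hTfin.subset Set.diff_subset)
    intro t ⟨ht, hne⟩
    rcases hTS ht with h | h
    · exact absurd h hne
    · exact h

/-- Every compact regular frame is strongly regular: every element is the join
of the elements `b` with `b ≺₀ a`, where `≺₀` is the greatest interpolative
relation contained in the well-inside relation. -/

theorem compact_regular_stronglyRegular
    {L : Type*} [Order.Frame L] (hc : IsCompactFrame L) (hr : IsRegularFrame L) :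
    ∀ a : L, a = sSup {b | gis WellInside b a} := by
  intro a
  have hint := wellInside_interpolative hc hr
  have hset : {b | gis WellInside b a} = {b | WellInside b a} := by
    ext b
    constructor
    · rintro ⟨s, hs, _, hsb⟩
      exact hs b a hsb
    · intro hb
      exact ⟨WellInside, fun _ _ h => h, hint, hb⟩
  rw [hset]
  exact hr a
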